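/- A topological space X validates the formula AT0 := (p ∧ [≠]¬p ∧ ⟨≠⟩(q ∧ [≠]¬q)) → (□¬q ∨ ⟨≠⟩(q ∧ □¬p)) under all valuations (where □ is interpreted as topological interior and [≠]φ means 'φ holds at all points other than the current one') if and only if X is a T0 space. -/

import Mathlib

inductive Formula : Type where
  | var : Nat → Formula
  | bot : Formula
  | imp : Formula → Formula → Formula
  | box : Formula → Formula
  | dbox : Formula → Formula

def Formula.neg (φ : Formula) : Formula := .imp φ .bot
def Formula.and (φ ψ : Formula) : Formula := .neg (.imp φ (.neg ψ))
def Formula.or (φ ψ : Formula) : Formula := .imp (.neg φ) ψ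
def Formula.ddiam (φ : Formula) : Formula := .neg (.dbox (.neg φ))

/-- AT0 := (p ∧ [≠]¬p ∧ ⟨≠⟩(q ∧ [≠]¬q)) → (□¬q ∨ ⟨≠⟩(q ∧ □¬p)), with p = var 0, q = var 1. -/
def AT0 : Formula :=
  .imp (.and (.and (.var 0) (.dbox (.neg (.var 0))))
             (.ddiam (.and (.var 1) (.dbox (.neg (.var 1))))))
       (.or (.box (.neg (.var 1))) (.ddiam (.and (.var 1) (.box (.neg (.var 0))))))

/-- Plain topological semantics: `□` is interior, `[≠]φ` means `φ` holds at all
points other than the current one. -/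
def tsat {X : Type*} [TopologicalSpace X] (V : Nat → Set X) : X → Formula → Prop
  | x, .var p => x ∈ V p
  | _, .bot => False
  | x, .imp φ ψ => tsat V x φ → tsat V x ψ
  | x, .box φ => ∃ U : Set X, IsOpen U ∧ x ∈ U ∧ ∀ y ∈ U, tsat V y φ
  | x, .dbox φ => ∀ y, y ≠ x → tsat V y φ


/-- A topological space validates AT0 under all valuations iff it is T0. -/
theorem stmt0 {X : Type*} [TopologicalSpace X] :
    (∀ (V : Nat → Set X) (x : X), tsat V x AT0) ↔ T0Space X := by
  constructor
  · intro h
    rw [t0Space_iff_exists_isOpen_xor'_mem]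
    intro x y hxy
    have hx := h (fun n => if n = 0 then {x} else {y}) x
    simp [AT0, Formula.and, Formula.or, Formula.neg, Formula.ddiam, tsat] at hx
    by_cases hU : ∃ U : Set X, IsOpen U ∧ x ∈ U ∧ y ∉ U
    · obtain ⟨U, hUo, hxU, hyU⟩ := hU
      exact ⟨U, hUo, Or.inl ⟨hxU, hyU⟩⟩
    · push_neg at hU
      obtain ⟨_, W, hWo, hzW, hxW⟩ :=
        hx (fun he => hxy he.symm) (fun U hUo hxU => hU U hUo hxU)
      exact ⟨W, hWo, Or.inr ⟨hzW, hxW⟩⟩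
  · intro hT0 V x
    simp [AT0, Formula.and, Formula.or, Formula.neg, Formula.ddiam, tsat]
    intro hp hponly y hyx hyq hqonly hmeet
    obtain ⟨U, hUo, hxor⟩ := exists_isOpen_xor'_mem (fun he => hyx he.symm : x ≠ y)
    rcases hxor with ⟨hxU, hyU⟩ | ⟨hyU, hxU⟩
    · exfalso
      obtain ⟨z, hzU, hzq⟩ := hmeet U hUo hxU
      rcases eq_or_ne z y with rfl | hzy
      · exact hyU hzU
      · exact hqonly z hzy hzq
    · refine ⟨y, hyx, hyq, U, hUo, hyU, fun w hwU hwp => ?_⟩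
      rcases eq_or_ne w x with rfl | hwx
      · exact hxU hwU
      · exact hponly w hwx hwp
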